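/- For a prime p ≥ 7 and 1 ≤ a ≤ 5, let C_a^{(2)} be the number of 6-tuples (x_1,…,x_6) with 0 ≤ x_i < p and Σx_i = 2p - a. Then C_1^{(2)} + C_5^{(2)} ≡ -(8/5)p (mod p²), C_2^{(2)} + C_4^{(2)} ≡ (2/5)p (mod p²), and C_3^{(2)} ≡ -(2/15)p (mod p²). -/

import Mathlib

/-- `x ≡ y (mod p^r)` as p-integral rationals. -/
def ratCong (p r : ℕ) (x y : ℚ) : Prop :=
  ∃ z : ℚ, x - y = (p : ℚ) ^ r * z ∧ ¬ (p ∣ z.den)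

/-- `C_a^{(m)}`: number of 6-tuples `(x₁,…,x₆)` with `0 ≤ xᵢ < p` and `Σ xᵢ = m·p - a`. -/
def Cam (p m a : ℕ) : ℕ :=
  ((Fintype.piFinset fun _ : Fin 6 => Finset.range p).filter
    (fun x => (∑ i, (x i : ℤ)) = m * p - a)).card

theorem card_adt (N : ℕ) : (Finset.Nat.antidiagonalTuple 6 N).card = (N+5).choose 5 := by
  rw [← Finset.piAntidiag_univ_fin_eq_antidiagonalTuple, ← Finset.map_sym_eq_piAntidiag,
    Finset.card_map, Finset.sym_univ, Finset.card_univ, Sym.card_sym_eq_choose,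
    Fintype.card_fin, show 6 + N - 1 = N + 5 by omega, Nat.choose_symm_add]

theorem card_slice (p N : ℕ) (hpN : p ≤ N) (i : Fin 6) :
    ((Finset.Nat.antidiagonalTuple 6 N).filter (fun x => p ≤ x i)).card
      = (Finset.Nat.antidiagonalTuple 6 (N - p)).card := by
  apply Finset.card_bij' (fun x _ => Function.update x i (x i - p))
    (fun y _ => Function.update y i (y i + p))
  · intro x hx
    simp only [Finset.mem_filter] at hx
    funext j
    rcases eq_or_ne j i with rfl | hj
    · simp; omega
    · simp [Function.update_of_ne hj]
  · intro y hy
    funext j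
    rcases eq_or_ne j i with rfl | hj
    · simp
    · simp [Function.update_of_ne hj]
  · intro x hx
    simp only [Finset.mem_filter, Finset.Nat.mem_antidiagonalTuple] at hx ⊢
    rw [Finset.sum_update_of_mem (Finset.mem_univ i)]
    have := Finset.sum_update_of_mem (f := x) (Finset.mem_univ i) (x i)
    rw [Function.update_eq_self] at this
    omega
  · intro y hy
    simp only [Finset.mem_filter, Finset.Nat.mem_antidiagonalTuple] at hy ⊢
    have := Finset.sum_update_of_mem (f := y) (Finset.mem_univ i) (y i)
    rw [Function.update_eq_self] at this
    refine ⟨?_, ?_⟩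
    · rw [Finset.sum_update_of_mem (Finset.mem_univ i)]
      omega
    · simp

theorem key (p N : ℕ) (h1 : p ≤ N) (h2 : N < 2*p) :
    ((Fintype.piFinset fun _ : Fin 6 => Finset.range p).filter
      (fun x => ∑ i, x i = N)).card + 6 * (N - p + 5).choose 5 = (N + 5).choose 5 := by
  classical
  set T := Finset.Nat.antidiagonalTuple 6 N with hT
  have hA : (Fintype.piFinset fun _ : Fin 6 => Finset.range p).filter
      (fun x => ∑ i, x i = N) = T.filter (fun x => ∀ i, x i < p) := by
    ext x
    simp [hT, Finset.Nat.mem_antidiagonalTuple, Fintype.mem_piFinset, and_comm]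
  have hdisj : ∀ i ∈ Finset.univ, ∀ j ∈ Finset.univ, i ≠ j →
      Disjoint (T.filter (fun x => p ≤ x i)) (T.filter (fun x => p ≤ x j)) := by
    intro i _ j _ hij
    rw [Finset.disjoint_left]
    intro x hxi hxj
    simp only [Finset.mem_filter, hT, Finset.Nat.mem_antidiagonalTuple] at hxi hxj
    have : x i + x j ≤ ∑ k, x k :=
      Finset.add_le_sum (fun k _ => Nat.zero_le _) (Finset.mem_univ i) (Finset.mem_univ j) hij
    omega
  have hB : T.filter (fun x => ¬ ∀ i, x i < p)
      = Finset.univ.biUnion (fun i : Fin 6 => T.filter (fun x => p ≤ x i)) := by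
    ext x
    simp only [Finset.mem_filter, Finset.mem_biUnion, Finset.mem_univ, true_and, not_forall,
      not_lt]
    tauto
  have hcount : (T.filter (fun x => ¬ ∀ i, x i < p)).card = 6 * (N - p + 5).choose 5 := by
    rw [hB, Finset.card_biUnion hdisj]
    simp [hT, card_slice p N h1, card_adt]
  have := Finset.card_filter_add_card_filter_not (s := T) (p := fun x => ∀ i, x i < p)
  rw [hA, ← card_adt N, ← this, hcount]

theorem cam_eq (p a : ℕ) (ha1 : 1 ≤ a) (ha5 : a ≤ 5) (hp : 7 ≤ p) :
    Cam p 2 a + 6 * ((p - a) + 5).choose 5 = ((2*p - a) + 5).choose 5 := by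
  have hfe : ((Fintype.piFinset fun _ : Fin 6 => Finset.range p).filter
      (fun x => (∑ i, (x i : ℤ)) = 2 * p - a))
      = ((Fintype.piFinset fun _ : Fin 6 => Finset.range p).filter
      (fun x => ∑ i, x i = 2*p - a)) := by
    apply Finset.filter_congr
    intro x _
    have hx : (∑ i, (x i : ℤ)) = ((∑ i, x i : ℕ) : ℤ) := by push_cast; ring
    rw [hx]
    constructor
    · intro h
      have : ((∑ i, x i : ℕ) : ℤ) = 2 * p - a := h
      omega
    · intro h
      rw [h]
      omega
  have hsub : 2*p - a - p = p - a := by omega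
  have hkey := key p (2*p - a) (by omega) (by omega)
  rw [hsub] at hkey
  have hC : Cam p 2 a = ((Fintype.piFinset fun _ : Fin 6 => Finset.range p).filter
      (fun x => ∑ i, x i = 2*p - a)).card := by
    unfold Cam
    rw [← hfe]
    norm_num
  rw [hC]
  exact hkey

lemma chooseN (m : ℕ) : 120 * (m+5).choose 5 = (m+1)*(m+2)*(m+3)*(m+4)*(m+5) := by
  have h := Nat.descFactorial_eq_factorial_mul_choose (m+5) 5
  rw [show (Nat.factorial 5) = 120 from rfl] at h
  rw [← h]
  simp [Nat.descFactorial_succ]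
  ring_nf

lemma chooseQ (m : ℕ) : ((m+5).choose 5 : ℚ)
    = ((m:ℚ)+1)*((m:ℚ)+2)*((m:ℚ)+3)*((m:ℚ)+4)*((m:ℚ)+5)/120 := by
  have h := congrArg (fun n : ℕ => (n:ℚ)) (chooseN m)
  push_cast at h
  field_simp
  linarith

lemma camQ (p a : ℕ) (ha1 : 1 ≤ a) (ha5 : a ≤ 5) (hp : 7 ≤ p) :
    (Cam p 2 a : ℚ) =
      ((2*(p:ℚ)-a+1)*(2*(p:ℚ)-a+2)*(2*(p:ℚ)-a+3)*(2*(p:ℚ)-a+4)*(2*(p:ℚ)-a+5)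
      - 6*(((p:ℚ)-a+1)*((p:ℚ)-a+2)*((p:ℚ)-a+3)*((p:ℚ)-a+4)*((p:ℚ)-a+5)))/120 := by
  have hc := cam_eq p a ha1 ha5 hp
  have hq := congrArg (fun n : ℕ => (n:ℚ)) hc
  simp only [Nat.cast_add, Nat.cast_mul, Nat.cast_ofNat] at hq
  rw [chooseQ, chooseQ] at hq
  have h1 : ((p - a : ℕ) : ℚ) = (p:ℚ) - a := by
    have h : a ≤ p := by omega
    push_cast [h]; ring
  have h2 : ((2*p - a : ℕ) : ℚ) = 2*(p:ℚ) - a := by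
    have h : a ≤ 2*p := by omega
    push_cast [h]; ring
  rw [h1, h2] at hq
  linarith

lemma den_ok (p : ℕ) (hp : p.Prime) (hp7 : 7 ≤ p) (n : ℤ) (d : ℤ) (hd : d ∣ 120) :
    ¬ (p ∣ ((n : ℚ) / (d : ℚ)).den) := by
  intro hdvd
  have h1 : (((n : ℚ) / (d : ℚ)).den : ℤ) ∣ d := by
    rw [← Rat.divInt_eq_div]
    exact Rat.den_dvd n d
  have h2 : (p : ℤ) ∣ d := dvd_trans (Int.natCast_dvd_natCast.mpr hdvd) h1
  have h3 : (p : ℤ) ∣ 120 := dvd_trans h2 hd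
  have h4 : p ∣ 120 := by exact_mod_cast h3
  rw [show (120 : ℕ) = 2 * (2 * (2 * (3 * 5))) by norm_num] at h4
  have hle : ∀ m : ℕ, 0 < m → p ∣ m → p ≤ m := fun m hm h => Nat.le_of_dvd hm h
  rcases (Nat.Prime.dvd_mul hp).mp h4 with h | h
  · exact absurd (hle 2 (by norm_num) h) (by omega)
  rcases (Nat.Prime.dvd_mul hp).mp h with h | h
  · exact absurd (hle 2 (by norm_num) h) (by omega)
  rcases (Nat.Prime.dvd_mul hp).mp h with h | h
  · exact absurd (hle 2 (by norm_num) h) (by omega)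
  rcases (Nat.Prime.dvd_mul hp).mp h with h | h
  · exact absurd (hle 3 (by norm_num) h) (by omega)
  · exact absurd (hle 5 (by norm_num) h) (by omega)

theorem stmt_7 (p : ℕ) (hp : p.Prime) (hp7 : 7 ≤ p) :
    ratCong p 2 ((Cam p 2 1 : ℚ) + Cam p 2 5 : ℚ) (-(8 / 5 : ℚ) * p) ∧
    ratCong p 2 ((Cam p 2 2 : ℚ) + Cam p 2 4 : ℚ) ((2 / 5 : ℚ) * p) ∧
    ratCong p 2 ((Cam p 2 3 : ℚ)) (-(2 / 15 : ℚ) * p) := by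
  have h1 := camQ p 1 (by norm_num) (by norm_num) hp7
  have h2 := camQ p 2 (by norm_num) (by norm_num) hp7
  have h3 := camQ p 3 (by norm_num) (by norm_num) hp7
  have h4 := camQ p 4 (by norm_num) (by norm_num) hp7
  have h5 := camQ p 5 (by norm_num) (by norm_num) hp7
  refine ⟨⟨((((p:ℤ) * (35 + 13 * (p:ℤ)^2)) : ℤ) : ℚ) / ((30 : ℤ) : ℚ), ?_, ?_⟩,
         ⟨((((p:ℤ) * (5 + 13 * (p:ℤ)^2)) : ℤ) : ℚ) / ((30 : ℤ) : ℚ), ?_, ?_⟩,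
         ⟨((((p:ℤ) * (-5 + 13 * (p:ℤ)^2)) : ℤ) : ℚ) / ((60 : ℤ) : ℚ), ?_, ?_⟩⟩
  · rw [h1, h5]; push_cast; ring
  · exact den_ok p hp hp7 _ 30 (by norm_num)
  · rw [h2, h4]; push_cast; ring
  · exact den_ok p hp hp7 _ 30 (by norm_num)
  · rw [h3]; push_cast; ring
  · exact den_ok p hp hp7 _ 60 (by norm_num)
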